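/- Let q be a primitive m-th root of unity in K and λ₁, λ₂ ∈ K nonzero, and let M(λ) be the Verma module for Mat₂(q) with basis {f(a,b) : 0 ≤ a ≤ m−1, b ∈ ℕ}. For p ≥ 1 let M_{p,m} be the K-span of {f(a,b) : 0 ≤ a ≤ m−1, b ≥ pm}. Then every Mat₂(q)-submodule W of M(λ) containing M_{p,m} is equal either to M(λ) or to M_{r,m} for some 1 ≤ r ≤ p. -/

import Mathlib

noncomputable section

open FreeAlgebra MulOpposite

/-- The relations of the Dipper–Donkin quantized matrix algebra of rank 2:
`Z12·Z11 = Z11·Z12`, `Z21·Z11 = q·Z11·Z21`, `Z22·Z21 = Z21·Z22`, `Z22·Z12 = q·Z12·Z22`,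
`Z21·Z12 = q·Z12·Z21`, `Z22·Z11 = Z11·Z22 + (q−1)·Z12·Z21`, where the generators
`Z11, Z12, Z21, Z22` are the images of `0, 1, 2, 3 : Fin 4`. -/
inductive DDrel {K : Type*} [Field K] (q : K) :
    FreeAlgebra K (Fin 4) → FreeAlgebra K (Fin 4) → Prop
  | r1 : DDrel q (ι K (1 : Fin 4) * ι K (0 : Fin 4)) (ι K (0 : Fin 4) * ι K (1 : Fin 4))
  | r2 : DDrel q (ι K (2 : Fin 4) * ι K (0 : Fin 4)) (q • (ι K (0 : Fin 4) * ι K (2 : Fin 4)))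
  | r3 : DDrel q (ι K (3 : Fin 4) * ι K (2 : Fin 4)) (ι K (2 : Fin 4) * ι K (3 : Fin 4))
  | r4 : DDrel q (ι K (3 : Fin 4) * ι K (1 : Fin 4)) (q • (ι K (1 : Fin 4) * ι K (3 : Fin 4)))
  | r5 : DDrel q (ι K (2 : Fin 4) * ι K (1 : Fin 4)) (q • (ι K (1 : Fin 4) * ι K (2 : Fin 4)))
  | r6 : DDrel q (ι K (3 : Fin 4) * ι K (0 : Fin 4))
      (ι K (0 : Fin 4) * ι K (3 : Fin 4) + (q - 1) • (ι K (1 : Fin 4) * ι K (2 : Fin 4)))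

/-- The Dipper–Donkin quantized matrix algebra `Mat₂(q)`: the quotient of the free
`K`-algebra on four generators by the two-sided ideal generated by the relations above. -/
abbrev DDMat2 {K : Type*} [Field K] (q : K) := RingQuot (DDrel q)

variable {K : Type*} [Field K]

/-- The generator `Z11` of `Mat₂(q)`. -/
def Z11 (q : K) : DDMat2 q := RingQuot.mkAlgHom K (DDrel q) (ι K (0 : Fin 4))
/-- The generator `Z12` of `Mat₂(q)`. -/
def Z12 (q : K) : DDMat2 q := RingQuot.mkAlgHom K (DDrel q) (ι K (1 : Fin 4))
/-- The generator `Z21` of `Mat₂(q)`. -/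
def Z21 (q : K) : DDMat2 q := RingQuot.mkAlgHom K (DDrel q) (ι K (2 : Fin 4))
/-- The generator `Z22` of `Mat₂(q)`. -/
def Z22 (q : K) : DDMat2 q := RingQuot.mkAlgHom K (DDrel q) (ι K (3 : Fin 4))

/-- The underlying space of the Verma module `M(λ)`: the `K`-vector space with basis
`f(a,b)`, `a : Fin m`, `b : ℕ`, realized as finitely supported functions. -/
abbrev VermaSpace (K : Type*) [Field K] (m : ℕ) := ((Fin m × ℕ) →₀ K)

variable (q la lb : K) (m : ℕ) [NeZero m]

/-- The action of `Z11` on the Verma module `M(λ)`: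
`f(a,b)·Z11 = 0` if `b = 0` and `λ₁·q^a·(q^b − 1)·f(a+1,b−1)` if `b ≥ 1`, where `f(m,c)`
is interpreted as `λ₂·f(0,c)` (addition in `Fin m` is cyclic). -/
noncomputable def VF11 : VermaSpace K m →ₗ[K] VermaSpace K m :=
  Finsupp.linearCombination K fun p : Fin m × ℕ =>
    if p.2 = 0 then 0 else
      ((if (p.1 : ℕ) = m - 1 then lb else 1) * la * q ^ (p.1 : ℕ) * (q ^ p.2 - 1)) •
        Finsupp.single (p.1 + 1, p.2 - 1) (1 : K)

/-- The action of `Z12` on the Verma module: `f(a,b)·Z12 = q^{a+b}·λ₁·f(a,b)`. -/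
noncomputable def VF12 : VermaSpace K m →ₗ[K] VermaSpace K m :=
  Finsupp.linearCombination K fun p : Fin m × ℕ =>
    (q ^ ((p.1 : ℕ) + p.2) * la) • Finsupp.single p (1 : K)

/-- The action of `Z21` on the Verma module:
`f(a,b)·Z21 = f(a+1,b)` if `a ≤ m−2` and `λ₂·f(0,b)` if `a = m−1`. -/
noncomputable def VF21 : VermaSpace K m →ₗ[K] VermaSpace K m :=
  Finsupp.linearCombination K fun p : Fin m × ℕ =>
    (if (p.1 : ℕ) = m - 1 then lb else 1) • Finsupp.single (p.1 + 1, p.2) (1 : K)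

/-- The action of `Z22` on the Verma module: `f(a,b)·Z22 = f(a,b+1)`. -/
noncomputable def VF22 : VermaSpace K m →ₗ[K] VermaSpace K m :=
  Finsupp.linearCombination K fun p : Fin m × ℕ =>
    Finsupp.single (p.1, p.2 + 1) (1 : K)

/-- The subspace `M_{p,m}` of the Verma module, spanned by the basis vectors `f(a,b)`
with `b ≥ p·m`. -/
def Mpm (p : ℕ) : Submodule K (VermaSpace K m) :=
  Submodule.span K
    {v : VermaSpace K m | ∃ (a : Fin m) (b : ℕ), p * m ≤ b ∧ v = Finsupp.single (a, b) (1 : K)}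

namespace DDAux
set_option linter.unusedSectionVars false
open scoped Fin.NatCast Fin.CommRing

lemma VF11_single (a : Fin m) (b : ℕ) :
    VF11 q la lb m (Finsupp.single (a, b) 1) =
      if b = 0 then 0 else
        ((if (a : ℕ) = m - 1 then lb else 1) * la * q ^ (a : ℕ) * (q ^ b - 1)) •
          Finsupp.single (a + 1, b - 1) (1 : K) := by
  rw [VF11, Finsupp.linearCombination_single, one_smul]

lemma VF12_single (a : Fin m) (b : ℕ) :
    VF12 q la m (Finsupp.single (a, b) 1) =
      (q ^ ((a : ℕ) + b) * la) • Finsupp.single (a, b) (1 : K) := by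
  rw [VF12, Finsupp.linearCombination_single, one_smul]

lemma VF21_single (a : Fin m) (b : ℕ) :
    VF21 lb m (Finsupp.single (a, b) 1) =
      (if (a : ℕ) = m - 1 then lb else 1) • Finsupp.single (a + 1, b) (1 : K) := by
  rw [VF21, Finsupp.linearCombination_single, one_smul]

lemma VF22_single (a : Fin m) (b : ℕ) :
    VF22 (K := K) m (Finsupp.single (a, b) 1) = Finsupp.single (a, b + 1) (1 : K) := by
  rw [VF22, Finsupp.linearCombination_single, one_smul]

lemma diag_apply {ι : Type*} (T : (ι →₀ K) →ₗ[K] (ι →₀ K)) (d : ι → K)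
    (h : ∀ p, T (Finsupp.single p 1) = d p • Finsupp.single p 1) (w : ι →₀ K) (r : ι) :
    T w r = d r * w r := by
  induction w using Finsupp.induction_linear with
  | zero => simp
  | add f g hf hg => simp [map_add, Finsupp.add_apply, hf, hg, mul_add]
  | single p c =>
    have h1 : Finsupp.single p c = c • Finsupp.single p (1 : K) := by
      rw [Finsupp.smul_single, smul_eq_mul, mul_one]
    rw [h1, map_smul, h]
    simp only [Finsupp.smul_apply, Finsupp.single_apply, smul_eq_mul]
    by_cases hp : p = r <;> simp [hp] <;> ring

open scoped Classical in
lemma filter_mem {ι : Type*} (T : (ι →₀ K) →ₗ[K] (ι →₀ K)) (d : ι → K)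
    (h : ∀ p, T (Finsupp.single p 1) = d p • Finsupp.single p 1)
    (W : Submodule K (ι →₀ K)) (hW : ∀ v ∈ W, T v ∈ W) (μ : K) :
    ∀ w ∈ W, w.filter (fun p => d p = μ) ∈ W := by
  classical
  suffices H : ∀ n (w : ι →₀ K), w ∈ W → w.support.card = n →
      w.filter (fun p => d p = μ) ∈ W by
    exact fun w hw => H _ w hw rfl
  intro n
  induction n using Nat.strong_induction_on with
  | _ n ih =>
    intro w hw hc
    by_cases hall : ∀ p ∈ w.support, d p = μ
    · have heq : w.filter (fun p => d p = μ) = w := by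
        ext r
        rw [Finsupp.filter_apply]
        split_ifs with h1
        · rfl
        · by_contra h2
          exact h1 (hall r (Finsupp.mem_support_iff.mpr fun h3 => h2 h3.symm))
      rwa [heq]
    · push_neg at hall
      obtain ⟨p₀, hp₀, hne⟩ := hall
      set w' := T w - d p₀ • w with hw'def
      have hw'W : w' ∈ W := Submodule.sub_mem _ (hW w hw) (Submodule.smul_mem _ _ hw)
      have happ : ∀ r, w' r = (d r - d p₀) * w r := by
        intro r
        simp [hw'def, Finsupp.sub_apply, Finsupp.smul_apply, diag_apply T d h w r,
          smul_eq_mul, sub_mul]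
      have hsubset : w'.support ⊆ w.support := by
        intro r hr
        rw [Finsupp.mem_support_iff] at hr ⊢
        intro h0
        exact hr (by rw [happ, h0, mul_zero])
      have hss : w'.support ⊂ w.support := by
        rw [Finset.ssubset_iff_of_subset hsubset]
        refine ⟨p₀, hp₀, ?_⟩
        rw [Finsupp.notMem_support_iff, happ, sub_self, zero_mul]
      have hcard : w'.support.card < n := hc ▸ Finset.card_lt_card hss
      have hfil : w'.filter (fun p => d p = μ) ∈ W := ih _ hcard w' hw'W rfl
      have hrel : w'.filter (fun p => d p = μ) =
          (μ - d p₀) • w.filter (fun p => d p = μ) := by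
        ext r
        rw [Finsupp.smul_apply, Finsupp.filter_apply, Finsupp.filter_apply]
        split_ifs with h1
        · rw [happ, h1, smul_eq_mul]
        · simp
      have hmem := Submodule.smul_mem W (μ - d p₀)⁻¹ hfil
      rw [hrel, smul_smul, inv_mul_cancel₀ (sub_ne_zero.mpr (Ne.symm hne)), one_smul] at hmem
      exact hmem


lemma val_add_one' (a : Fin m) : ((a + 1 : Fin m) : ℕ) = ((a : ℕ) + 1) % m := by
  have h1 : ((1 : Fin m) : ℕ) = 1 % m := by
    rw [show (1 : Fin m) = ((1 : ℕ) : Fin m) by norm_cast, Fin.val_natCast]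
  rw [Fin.add_def, h1]
  conv_rhs => rw [Nat.add_mod, Nat.mod_eq_of_lt a.isLt]

/-- `VF21` iterated `k` times on a basis vector. -/
lemma VF21_pow (k : ℕ) (a : Fin m) (b : ℕ) :
    ((VF21 lb m) ^ k) (Finsupp.single (a, b) 1) =
      (lb ^ (((a : ℕ) + k) / m)) • Finsupp.single (a + (k : Fin m), b) (1 : K) := by
  have hmpos : 0 < m := Nat.pos_of_ne_zero (NeZero.ne m)
  induction k generalizing a with
  | zero =>
    simp [Nat.div_eq_of_lt a.isLt]
  | succ k ih =>
    rw [pow_succ, Module.End.mul_apply, VF21_single, map_smul, ih]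
    have hcast : ((k + 1 : ℕ) : Fin m) = (k : Fin m) + 1 := by push_cast; ring
    have hidx : a + 1 + (k : Fin m) = a + ((k + 1 : ℕ) : Fin m) := by
      rw [hcast]; ring
    rw [smul_smul, hidx]
    congr 1
    by_cases hif : (a : ℕ) = m - 1
    · have h1 : ((a : ℕ) + 1) % m = 0 := by
        rw [show (a : ℕ) + 1 = m by omega, Nat.mod_self]
      rw [if_pos hif, val_add_one', h1]
      rw [show (a : ℕ) + (k + 1) = k + m by omega, Nat.add_div_right _ hmpos,
        zero_add, pow_succ]
      ring
    · have hlt : (a : ℕ) + 1 < m := by have := a.isLt; omega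
      rw [if_neg hif, val_add_one', Nat.mod_eq_of_lt hlt, one_mul,
        show (a : ℕ) + 1 + k = (a : ℕ) + (k + 1) by ring]

/-- The diagonal operator `D = VF21^(m-1) ∘ VF11 ∘ VF22`. -/
noncomputable def Dmap : VermaSpace K m →ₗ[K] VermaSpace K m :=
  ((VF21 lb m) ^ (m - 1)) ∘ₗ (VF11 q la lb m) ∘ₗ (VF22 (K := K) m)

lemma D_single (a : Fin m) (b : ℕ) :
    Dmap q la lb m (Finsupp.single (a, b) 1) =
      (lb * la * q ^ (a : ℕ) * (q ^ (b + 1) - 1)) • Finsupp.single (a, b) (1 : K) := by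
  have hmpos : 0 < m := Nat.pos_of_ne_zero (NeZero.ne m)
  rw [Dmap, LinearMap.comp_apply, LinearMap.comp_apply, VF22_single, VF11_single,
    if_neg (Nat.succ_ne_zero b), map_smul, VF21_pow]
  have hidx : a + 1 + ((m - 1 : ℕ) : Fin m) = a := by
    have h2 : ((1 + (m - 1) : ℕ) : Fin m) = ((m : ℕ) : Fin m) := by congr 1; omega
    push_cast at h2
    rw [Fin.natCast_self] at h2
    rw [add_assoc, h2, add_zero]
  rw [show b + 1 - 1 = b from rfl, hidx, smul_smul]
  congr 1
  by_cases hif : (a : ℕ) = m - 1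
  · have h1 : ((a : ℕ) + 1) % m = 0 := by
      rw [show (a : ℕ) + 1 = m by omega, Nat.mod_self]
    rw [if_pos hif, val_add_one', h1, zero_add, Nat.div_eq_of_lt (by omega), pow_zero,
      mul_one, hif]
  · have hlt : (a : ℕ) + 1 < m := by have := a.isLt; omega
    rw [if_neg hif, val_add_one', Nat.mod_eq_of_lt hlt,
      show (a : ℕ) + 1 + (m - 1) = (a : ℕ) + m by omega, Nat.add_div_right _ hmpos,
      Nat.div_eq_of_lt a.isLt, pow_one]
    ring

lemma pow_mem {W : Submodule K (VermaSpace K m)} (T : VermaSpace K m →ₗ[K] VermaSpace K m)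
    (hT : ∀ v ∈ W, T v ∈ W) (k : ℕ) : ∀ v ∈ W, (T ^ k) v ∈ W := by
  induction k with
  | zero => intro v hv; simpa using hv
  | succ k ih =>
    intro v hv
    rw [pow_succ, Module.End.mul_apply]
    exact ih _ (hT v hv)

lemma VF22_apply (w : VermaSpace K m) (a : Fin m) (b : ℕ) :
    VF22 (K := K) m w (a, b) = if b = 0 then 0 else w (a, b - 1) := by
  induction w using Finsupp.induction_linear with
  | zero => simp
  | add f g hf hg =>
    rw [map_add, Finsupp.add_apply, hf, hg, Finsupp.add_apply]
    split_ifs <;> simp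
  | single p c =>
    have h1 : Finsupp.single p c = c • Finsupp.single (p.1, p.2) (1 : K) := by
      rw [Finsupp.smul_single, smul_eq_mul, mul_one, Prod.mk.eta]
    rw [h1, map_smul, VF22_single]
    rcases b with _ | b
    · simp [Finsupp.single_apply, Prod.ext_iff]
    · rw [if_neg (Nat.succ_ne_zero b)]
      simp [Finsupp.single_apply, Prod.ext_iff]

lemma VF22_pow_apply (s : ℕ) (w : VermaSpace K m) (a : Fin m) (b : ℕ) :
    (((VF22 (K := K) m) ^ s) w) (a, b) = if b < s then 0 else w (a, b - s) := by
  induction s generalizing w b with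
  | zero => simp
  | succ s ih =>
    rw [pow_succ, Module.End.mul_apply, ih, VF22_apply]
    by_cases h1 : b < s
    · rw [if_pos h1, if_pos (by omega)]
    · rw [if_neg h1]
      by_cases h2 : b - s = 0
      · rw [if_pos h2, if_pos (by omega)]
      · rw [if_neg h2, if_neg (by omega), show b - s - 1 = b - (s + 1) by omega]


lemma mem_Mpm_of (r : ℕ) (v : VermaSpace K m) (hv : ∀ pt ∈ v.support, r * m ≤ pt.2) :
    v ∈ Mpm (K := K) m r := by
  have hrepr : v = ∑ pt ∈ v.support, Finsupp.single pt (v pt) := by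
    conv_lhs => rw [← Finsupp.sum_single v]
    rfl
  rw [hrepr]
  refine Submodule.sum_mem _ fun pt hpt => ?_
  have h1 : Finsupp.single pt (v pt) = (v pt) • Finsupp.single pt (1 : K) := by
    rw [Finsupp.smul_single, smul_eq_mul, mul_one]
  rw [h1]
  refine Submodule.smul_mem _ _ (Submodule.subset_span ⟨pt.1, pt.2, hv pt hpt, ?_⟩)
  rw [Prod.mk.eta]

lemma Mpm_zero : Mpm (K := K) m 0 = ⊤ := by
  rw [eq_top_iff]
  intro v _
  exact mem_Mpm_of m 0 v (by simp)

lemma sep (hprim : IsPrimitiveRoot q m) (hq0 : q ≠ 0) (hla : la ≠ 0) (hlb : lb ≠ 0)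
    (p1 p2 : Fin m × ℕ)
    (h1 : q ^ ((p1.1 : ℕ) + p1.2) * la = q ^ ((p2.1 : ℕ) + p2.2) * la)
    (h2 : lb * la * q ^ (p1.1 : ℕ) * (q ^ (p1.2 + 1) - 1) =
      lb * la * q ^ (p2.1 : ℕ) * (q ^ (p2.2 + 1) - 1)) :
    p1.1 = p2.1 ∧ p1.2 % m = p2.2 % m := by
  have hmpos : 0 < m := Nat.pos_of_ne_zero (NeZero.ne m)
  have e1 : q ^ ((p1.1 : ℕ) + p1.2) = q ^ ((p2.1 : ℕ) + p2.2) := mul_right_cancel₀ hla h1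
  have e2 : q ^ (p1.1 : ℕ) * (q ^ (p1.2 + 1) - 1) =
      q ^ (p2.1 : ℕ) * (q ^ (p2.2 + 1) - 1) := by
    apply mul_left_cancel₀ (mul_ne_zero hlb hla)
    linear_combination h2
  have e3 : q ^ (p1.1 : ℕ) = q ^ (p2.1 : ℕ) := by
    have expand : ∀ (a b : ℕ), q ^ a * (q ^ (b + 1) - 1) = q ^ (a + b) * q - q ^ a := by
      intro a b; rw [pow_add, pow_add]; ring
    rw [expand, expand, e1] at e2
    linear_combination -e2
  have ha : p1.1 = p2.1 :=
    Fin.ext (hprim.pow_inj p1.1.isLt p2.1.isLt e3)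
  have e4 : q ^ p1.2 = q ^ p2.2 := by
    rw [pow_add, pow_add, ha] at e1
    exact mul_left_cancel₀ (pow_ne_zero _ hq0) e1
  have hmodpow : ∀ b : ℕ, q ^ b = q ^ (b % m) := by
    intro b
    conv_lhs => rw [← Nat.div_add_mod b m]
    rw [pow_add, pow_mul, hprim.pow_eq_one, one_pow, one_mul]
  refine ⟨ha, hprim.pow_inj (Nat.mod_lt _ hmpos) (Nat.mod_lt _ hmpos) ?_⟩
  rw [← hmodpow, ← hmodpow, e4]

section Wlemmas

variable {W : Submodule K (VermaSpace K m)}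

lemma step_a (hlb : lb ≠ 0) (h21 : ∀ v ∈ W, VF21 lb m v ∈ W) {a : Fin m} {b : ℕ}
    (h : Finsupp.single (a, b) (1 : K) ∈ W) : Finsupp.single (a + 1, b) (1 : K) ∈ W := by
  have h0 := h21 _ h
  rw [VF21_single] at h0
  set c : K := if (a : ℕ) = m - 1 then lb else 1 with hc
  have hcne : c ≠ 0 := by rw [hc]; split_ifs <;> simp [hlb]
  have h1 := Submodule.smul_mem W c⁻¹ h0
  rwa [smul_smul, inv_mul_cancel₀ hcne, one_smul] at h1

lemma all_a (hlb : lb ≠ 0) (h21 : ∀ v ∈ W, VF21 lb m v ∈ W) {a : Fin m} {b : ℕ}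
    (h : Finsupp.single (a, b) (1 : K) ∈ W) (a' : Fin m) :
    Finsupp.single (a', b) (1 : K) ∈ W := by
  have key : ∀ k : ℕ, Finsupp.single (a + (k : Fin m), b) (1 : K) ∈ W := by
    intro k
    induction k with
    | zero => simpa using h
    | succ k ih =>
      have h1 := step_a lb m hlb h21 ih
      have hcast : ((k + 1 : ℕ) : Fin m) = (k : Fin m) + 1 := by push_cast; ring
      rw [hcast, ← add_assoc]
      exact h1
  have h2 := key (a' - a).val
  rwa [Fin.cast_val_eq_self, add_comm, sub_add_cancel] at h2

lemma ascend (h22 : ∀ v ∈ W, VF22 (K := K) m v ∈ W) {a : Fin m} {b : ℕ}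
    (h : Finsupp.single (a, b) (1 : K) ∈ W) (b' : ℕ) (hb : b ≤ b') :
    Finsupp.single (a, b') (1 : K) ∈ W := by
  induction b', hb using Nat.le_induction with
  | base => exact h
  | succ b' hb ih =>
    have h1 := h22 _ ih
    rwa [VF22_single] at h1

lemma descend (hprim : IsPrimitiveRoot q m) (hq0 : q ≠ 0) (hla : la ≠ 0) (hlb : lb ≠ 0)
    (h11 : ∀ v ∈ W, VF11 q la lb m v ∈ W) {a : Fin m} {b : ℕ}
    (h : Finsupp.single (a, b) (1 : K) ∈ W) :
    ∀ k, k ≤ b % m → Finsupp.single (a + (k : Fin m), b - k) (1 : K) ∈ W := by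
  have hmpos : 0 < m := Nat.pos_of_ne_zero (NeZero.ne m)
  intro k
  induction k with
  | zero => intro _; simpa using h
  | succ k ih =>
    intro hk
    have ihm := ih (by omega)
    have h0 := h11 _ ihm
    rw [VF11_single] at h0
    have hdm := Nat.div_add_mod b m
    have hmod : b % m < m := Nat.mod_lt _ hmpos
    rw [if_neg (show ¬ (b - k = 0) by omega)] at h0
    have hnd : ¬ (m ∣ (b - k)) := by
      intro hdvd
      have h3 : (b - k) % m = 0 := Nat.mod_eq_zero_of_dvd hdvd
      have h1 : b - k = m * (b / m) + (b % m - k) := by omega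
      rw [h1, Nat.mul_add_mod, Nat.mod_eq_of_lt (by omega)] at h3
      omega
    have hqbk : q ^ (b - k) ≠ 1 := fun h1 => hnd ((hprim.pow_eq_one_iff_dvd _).mp h1)
    set c : K := (if ((a + (k : Fin m) : Fin m) : ℕ) = m - 1 then lb else 1) * la *
      q ^ ((a + (k : Fin m) : Fin m) : ℕ) * (q ^ (b - k) - 1) with hc
    have hcne : c ≠ 0 := by
      rw [hc]
      refine mul_ne_zero (mul_ne_zero (mul_ne_zero ?_ hla) (pow_ne_zero _ hq0))
        (sub_ne_zero.mpr hqbk)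
      split_ifs <;> simp [hlb]
    have h1 := Submodule.smul_mem W c⁻¹ h0
    rw [smul_smul, inv_mul_cancel₀ hcne, one_smul] at h1
    have hcast : ((k + 1 : ℕ) : Fin m) = (k : Fin m) + 1 := by push_cast; ring
    have heq : (a + (k : Fin m) + 1, b - k - 1) = (a + ((k + 1 : ℕ) : Fin m), b - (k + 1)) := by
      rw [hcast, ← add_assoc, Nat.sub_sub]
    rwa [heq] at h1

lemma gen_le (hprim : IsPrimitiveRoot q m) (hq0 : q ≠ 0) (hla : la ≠ 0) (hlb : lb ≠ 0)
    (h11 : ∀ v ∈ W, VF11 q la lb m v ∈ W) (h21 : ∀ v ∈ W, VF21 lb m v ∈ W)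
    (h22 : ∀ v ∈ W, VF22 (K := K) m v ∈ W) {a : Fin m} {b : ℕ}
    (h : Finsupp.single (a, b) (1 : K) ∈ W) :
    Mpm (K := K) m (b / m) ≤ W := by
  have hmpos : 0 < m := Nat.pos_of_ne_zero (NeZero.ne m)
  rw [Mpm, Submodule.span_le]
  rintro v ⟨a', b', hb', rfl⟩
  simp only [SetLike.mem_coe]
  have hdm : b / m * m + b % m = b := Nat.div_add_mod' b m
  have hmod : b % m < m := Nat.mod_lt _ hmpos
  by_cases hbb : b ≤ b'
  · exact ascend m h22 (all_a lb m hlb h21 h a') b' hbb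
  · push_neg at hbb
    have hk : b - b' ≤ b % m := by omega
    have h2 := descend q la lb m hprim hq0 hla hlb h11 h (b - b') hk
    rw [show b - (b - b') = b' by omega] at h2
    exact all_a lb m hlb h21 h2 a'

end Wlemmas
end DDAux

/-- Let `q` be a primitive `m`-th root of unity and `λ₁, λ₂ ∈ K` nonzero.
Every `Mat₂(q)`-submodule `W` of the Verma module `M(λ)` (i.e. every `K`-subspace
invariant under the action of the four generators) containing `M_{p,m}` (`p ≥ 1`) equals
`M(λ)` or `M_{r,m}` for some `1 ≤ r ≤ p`. -/
theorem DDMat2_verma_submodules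
    (hq1 : q ^ m = 1) (hq2 : ∀ k : ℕ, 1 ≤ k → k < m → q ^ k ≠ 1)
    (hla : la ≠ 0) (hlb : lb ≠ 0) (p : ℕ) (hp : 1 ≤ p)
    (W : Submodule K (VermaSpace K m))
    (h11 : ∀ v ∈ W, VF11 q la lb m v ∈ W) (h12 : ∀ v ∈ W, VF12 q la m v ∈ W)
    (h21 : ∀ v ∈ W, VF21 lb m v ∈ W) (h22 : ∀ v ∈ W, VF22 (K := K) m v ∈ W)
    (hM : Mpm (K := K) m p ≤ W) :
    W = ⊤ ∨ ∃ r : ℕ, 1 ≤ r ∧ r ≤ p ∧ W = Mpm (K := K) m r := by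
  classical
  have hmpos : 0 < m := Nat.pos_of_ne_zero (NeZero.ne m)
  have hq0 : q ≠ 0 := by
    intro h
    rw [h, zero_pow (NeZero.ne m)] at hq1
    exact one_ne_zero hq1.symm
  have hprim : IsPrimitiveRoot q m := by
    refine ⟨hq1, fun l hl => ?_⟩
    by_contra hnd
    have h2 : q ^ l = q ^ (l % m) := by
      conv_lhs => rw [← Nat.div_add_mod l m]
      rw [pow_add, pow_mul, hq1, one_pow, one_mul]
    have h1 : q ^ (l % m) = 1 := by rw [← h2]; exact hl
    have h3 : l % m ≠ 0 := fun h => hnd (Nat.dvd_of_mod_eq_zero h)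
    exact hq2 (l % m) (by omega) (Nat.mod_lt _ hmpos) h1
  have hD : ∀ v ∈ W, DDAux.Dmap q la lb m v ∈ W := by
    intro v hv
    rw [DDAux.Dmap, LinearMap.comp_apply, LinearMap.comp_apply]
    exact DDAux.pow_mem m _ h21 _ _ (h11 _ (h22 _ hv))
  -- the key descent step
  have key : ∀ r : ℕ, 1 ≤ r → Mpm (K := K) m r ≤ W →
      ∀ w ∈ W, ∀ pt0 ∈ w.support, pt0.2 < r * m → Mpm (K := K) m (r - 1) ≤ W := by
    intro r hr hMr w hw pt0 hpt0 hlt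
    have hSne : (w.support.image Prod.snd).Nonempty :=
      ⟨pt0.2, Finset.mem_image_of_mem _ hpt0⟩
    set b₀ := (w.support.image Prod.snd).min' hSne with hb₀
    have hbmin : ∀ pt ∈ w.support, b₀ ≤ pt.2 := fun pt h =>
      Finset.min'_le _ _ (Finset.mem_image_of_mem _ h)
    obtain ⟨pt1, hpt1, hpt1b⟩ := Finset.mem_image.mp ((w.support.image Prod.snd).min'_mem hSne)
    set a₀ := pt1.1 with ha₀
    rw [← hb₀] at hpt1b
    have h0supp : (a₀, b₀) ∈ w.support := by
      have heq : (a₀, b₀) = pt1 := by rw [ha₀, ← hpt1b]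
      rw [heq]; exact hpt1
    have hb₀lt : b₀ < r * m := lt_of_le_of_lt (hbmin pt0 hpt0) hlt
    set r₀ := b₀ / m with hr₀
    have hdm : r₀ * m + b₀ % m = b₀ := Nat.div_add_mod' b₀ m
    have hmod : b₀ % m < m := Nat.mod_lt _ hmpos
    have hr₀le : r₀ + 1 ≤ r := by
      have h1 := (Nat.div_lt_iff_lt_mul hmpos).mpr hb₀lt
      omega
    set s := (r - 1) * m - r₀ * m with hs
    have hsub : r₀ * m ≤ (r - 1) * m := Nat.mul_le_mul_right _ (by omega)
    have hrm : (r - 1) * m + m = r * m := by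
      have h1 : r - 1 + 1 = r := by omega
      calc (r - 1) * m + m = (r - 1 + 1) * m := by ring
        _ = r * m := by rw [h1]
    set B := b₀ + s with hB
    have hBeq : B = (r - 1) * m + b₀ % m := by omega
    -- the shifted vector
    set w1 := ((VF22 (K := K) m) ^ s) w with hw1def
    have hw1W : w1 ∈ W := DDAux.pow_mem m _ h22 s w hw
    have hw1apply : ∀ a b, w1 (a, b) = if b < s then 0 else w (a, b - s) :=
      fun a b => DDAux.VF22_pow_apply m s w a b
    -- diagonal eigenvalue functions
    have hd12 : ∀ pt : Fin m × ℕ, VF12 q la m (Finsupp.single pt 1) =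
        (q ^ ((pt.1 : ℕ) + pt.2) * la) • Finsupp.single pt 1 := by
      intro pt
      conv_lhs => rw [← Prod.mk.eta (p := pt)]
      rw [DDAux.VF12_single, Prod.mk.eta]
    have hdD : ∀ pt : Fin m × ℕ, DDAux.Dmap q la lb m (Finsupp.single pt 1) =
        (lb * la * q ^ ((pt.1 : ℕ)) * (q ^ (pt.2 + 1) - 1)) • Finsupp.single pt 1 := by
      intro pt
      conv_lhs => rw [← Prod.mk.eta (p := pt)]
      rw [DDAux.D_single, Prod.mk.eta]
    set w2 := (w1.filter (fun pt : Fin m × ℕ =>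
        q ^ ((pt.1 : ℕ) + pt.2) * la = q ^ ((a₀ : ℕ) + B) * la)).filter
        (fun pt : Fin m × ℕ =>
          lb * la * q ^ ((pt.1 : ℕ)) * (q ^ (pt.2 + 1) - 1) =
            lb * la * q ^ ((a₀ : ℕ)) * (q ^ (B + 1) - 1)) with hw2def
    have hw2W : w2 ∈ W := by
      rw [hw2def]
      exact DDAux.filter_mem (DDAux.Dmap q la lb m) _ hdD W hD _ _
        (DDAux.filter_mem (VF12 q la m) _ hd12 W h12 _ w1 hw1W)
    have hw2apply : ∀ pt, w2 pt =
        if (lb * la * q ^ ((pt.1 : ℕ)) * (q ^ (pt.2 + 1) - 1) =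
              lb * la * q ^ ((a₀ : ℕ)) * (q ^ (B + 1) - 1)) ∧
            (q ^ ((pt.1 : ℕ) + pt.2) * la = q ^ ((a₀ : ℕ) + B) * la) then w1 pt else 0 := by
      intro pt
      rw [hw2def, Finsupp.filter_apply, Finsupp.filter_apply]
      by_cases h1 : lb * la * q ^ ((pt.1 : ℕ)) * (q ^ (pt.2 + 1) - 1) =
          lb * la * q ^ ((a₀ : ℕ)) * (q ^ (B + 1) - 1) <;>
        by_cases h2 : q ^ ((pt.1 : ℕ) + pt.2) * la = q ^ ((a₀ : ℕ) + B) * la <;>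
        simp [h1, h2]
    have hw2B : w2 (a₀, B) = w (a₀, b₀) := by
      rw [hw2apply, if_pos ⟨rfl, rfl⟩, hw1apply, if_neg (by omega),
        show B - s = b₀ by omega]
    have hw2Bne : w2 (a₀, B) ≠ 0 := by
      rw [hw2B]; exact Finsupp.mem_support_iff.mp h0supp
    have hsupp : ∀ pt ∈ w2.support, pt.1 = a₀ ∧ pt.2 % m = B % m ∧ B ≤ pt.2 := by
      intro pt hpt
      have hne := Finsupp.mem_support_iff.mp hpt
      rw [hw2apply] at hne
      by_cases hcond : (lb * la * q ^ ((pt.1 : ℕ)) * (q ^ (pt.2 + 1) - 1) =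
            lb * la * q ^ ((a₀ : ℕ)) * (q ^ (B + 1) - 1)) ∧
          (q ^ ((pt.1 : ℕ) + pt.2) * la = q ^ ((a₀ : ℕ) + B) * la)
      · rw [if_pos hcond] at hne
        obtain ⟨hcD, hc12⟩ := hcond
        have hsep := DDAux.sep q la lb m hprim hq0 hla hlb pt (a₀, B) hc12 hcD
        have h5 : ¬ pt.2 < s ∧ w (pt.1, pt.2 - s) ≠ 0 := by
          have h6 := hw1apply pt.1 pt.2
          rw [Prod.mk.eta] at h6
          rw [h6] at hne
          by_cases h7 : pt.2 < s
          · rw [if_pos h7] at hne; exact absurd rfl hne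
          · rw [if_neg h7] at hne; exact ⟨h7, hne⟩
        have h7 : b₀ ≤ pt.2 - s := hbmin _ (Finsupp.mem_support_iff.mpr h5.2)
        have h8 : ¬ pt.2 < s := h5.1
        exact ⟨hsep.1, hsep.2, by omega⟩
      · rw [if_neg hcond] at hne; exact absurd rfl hne
    set c₀ := w2 (a₀, B) with hc₀
    set rest := w2 - c₀ • Finsupp.single (a₀, B) (1 : K) with hrest
    have hrest_apply : ∀ pt, rest pt = if pt = (a₀, B) then 0 else w2 pt := by
      intro pt
      rw [hrest, Finsupp.sub_apply, Finsupp.smul_apply, Finsupp.single_apply]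
      by_cases h1 : pt = (a₀, B)
      · rw [if_pos h1, h1, if_pos rfl, smul_eq_mul, mul_one, ← hc₀, sub_self]
      · rw [if_neg h1, if_neg (fun h => h1 h.symm), smul_eq_mul, mul_zero, sub_zero]
    have hrestMpm : rest ∈ Mpm (K := K) m r := by
      apply DDAux.mem_Mpm_of
      intro pt hpt
      have hne := Finsupp.mem_support_iff.mp hpt
      rw [hrest_apply] at hne
      by_cases h1 : pt = (a₀, B)
      · rw [if_pos h1] at hne; exact absurd rfl hne
      · rw [if_neg h1] at hne
        have h2 := hsupp pt (Finsupp.mem_support_iff.mpr hne)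
        have h3 : pt.2 ≠ B := fun h4 => h1 (Prod.ext h2.1 h4)
        have h6 : m ∣ (pt.2 - B) := (Nat.modEq_iff_dvd' h2.2.2).mp h2.2.1.symm
        have h7 : m ≤ pt.2 - B := Nat.le_of_dvd (by omega) h6
        omega
    have hsingle : Finsupp.single (a₀, B) (1 : K) ∈ W := by
      have h1 : c₀ • Finsupp.single (a₀, B) (1 : K) = w2 - rest := by
        rw [hrest, sub_sub_cancel]
      have h2 : c₀ • Finsupp.single (a₀, B) (1 : K) ∈ W := by
        rw [h1]; exact Submodule.sub_mem _ hw2W (hMr hrestMpm)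
      have h3 := Submodule.smul_mem W c₀⁻¹ h2
      rwa [smul_smul, inv_mul_cancel₀ hw2Bne, one_smul] at h3
    have hgen := DDAux.gen_le q la lb m hprim hq0 hla hlb h11 h21 h22 hsingle
    have hBdiv : B / m = r - 1 := by
      have h1 : (r - 1) * m + b₀ % m = m * (r - 1) + b₀ % m := by ring
      rw [hBeq, h1, Nat.mul_add_div hmpos, Nat.div_eq_of_lt hmod, add_zero]
    rwa [hBdiv] at hgen
  -- final assembly
  have hJne : {r : ℕ | Mpm (K := K) m r ≤ W}.Nonempty := ⟨p, hM⟩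
  set rs := sInf {r : ℕ | Mpm (K := K) m r ≤ W} with hrs
  have hrsJ : Mpm (K := K) m rs ≤ W := Nat.sInf_mem hJne
  have hrsle : rs ≤ p := Nat.sInf_le hM
  by_cases h0 : rs = 0
  · left
    rw [h0, DDAux.Mpm_zero] at hrsJ
    exact top_le_iff.mp hrsJ
  · right
    refine ⟨rs, by omega, hrsle, le_antisymm ?_ hrsJ⟩
    intro w hw
    apply DDAux.mem_Mpm_of
    intro pt hpt
    by_contra hlt
    push_neg at hlt
    have hkey := key rs (by omega) hrsJ w hw pt hpt hlt
    have hmem : rs - 1 ∈ {r : ℕ | Mpm (K := K) m r ≤ W} := hkey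
    have hle := Nat.sInf_le hmem
    omega
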